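/- Let Γ' be a nonempty finite subset of (ℤ/2ℤ)^n × (ℤ/4ℤ)^n whose elements have pairwise distinct first coordinates (e.g., a subset of the graph of a function (ℤ/2ℤ)^n → (ℤ/4ℤ)^n). Let Y = {y ∈ (ℤ/4ℤ)^n : (0, y) ∈ 8Γ' − 8Γ'}. Then |Γ'| · |Y| ≤ |16Γ' − 16Γ'|. -/

import Mathlib

open Pointwise

/-- The `k`-fold sumset `kA = {a₁ + … + a_k : aᵢ ∈ A}` of a subset `A` of an abelian group. -/
def iterSumset {G : Type*} [AddCommMonoid G] (k : ℕ) (A : Set G) : Set G :=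
  {s | ∃ f : Fin k → G, (∀ i, f i ∈ A) ∧ (∑ i, f i) = s}

lemma mem_iterSumset_add {G : Type*} [AddCommMonoid G] {k m : ℕ} {A : Set G} {x y : G}
    (hx : x ∈ iterSumset k A) (hy : y ∈ iterSumset m A) : x + y ∈ iterSumset (k + m) A := by
  obtain ⟨f, hf, rfl⟩ := hx
  obtain ⟨g, hg, rfl⟩ := hy
  refine ⟨Fin.append f g, ?_, ?_⟩
  · intro i
    refine i.addCases (fun j => ?_) (fun j => ?_)
    · simpa [Fin.append_left] using hf j
    · simpa [Fin.append_right] using hg j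
  · simp [Fin.sum_univ_add, Fin.append_left, Fin.append_right]

lemma smul_mem_iterSumset {G : Type*} [AddCommMonoid G] {A : Set G} {a : G} (ha : a ∈ A)
    (k : ℕ) : k • a ∈ iterSumset k A :=
  ⟨fun _ => a, fun _ => ha, by simp⟩

lemma mem_iterSumset_one {G : Type*} [AddCommMonoid G] {A : Set G} {a : G} (ha : a ∈ A) :
    a ∈ iterSumset 1 A := by simpa using smul_mem_iterSumset ha 1

theorem graph_sumset_growth {n : ℕ}
    (Γ' : Finset ((Fin n → ZMod 2) × (Fin n → ZMod 4))) (hne : Γ'.Nonempty)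
    (hinj : ∀ p ∈ Γ', ∀ q ∈ Γ', p.1 = q.1 → p = q) :
    Γ'.card * Nat.card {y : Fin n → ZMod 4 //
        ((0 : Fin n → ZMod 2), y) ∈
          iterSumset 8 (↑Γ' : Set ((Fin n → ZMod 2) × (Fin n → ZMod 4))) - iterSumset 8 (↑Γ' : Set ((Fin n → ZMod 2) × (Fin n → ZMod 4)))} ≤
      Nat.card (iterSumset 16 (↑Γ' : Set ((Fin n → ZMod 2) × (Fin n → ZMod 4))) - iterSumset 16 (↑Γ' : Set ((Fin n → ZMod 2) × (Fin n → ZMod 4))) :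
        Set ((Fin n → ZMod 2) × (Fin n → ZMod 4))) := by
  classical
  obtain ⟨γ₀, hγ₀⟩ := hne
  have key : ∀ γ ∈ Γ', ∀ (y : Fin n → ZMod 4),
      ((0 : Fin n → ZMod 2), y) ∈
        iterSumset 8 (↑Γ' : Set ((Fin n → ZMod 2) × (Fin n → ZMod 4)))
          - iterSumset 8 (↑Γ' : Set ((Fin n → ZMod 2) × (Fin n → ZMod 4))) →
      γ + ((0 : Fin n → ZMod 2), y) - γ₀ ∈
        iterSumset 16 (↑Γ' : Set ((Fin n → ZMod 2) × (Fin n → ZMod 4)))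
          - iterSumset 16 (↑Γ' : Set ((Fin n → ZMod 2) × (Fin n → ZMod 4))) := by
    intro γ hγ y hy
    obtain ⟨a, ha, b, hb, hab⟩ := hy
    have hγ' : γ ∈ (↑Γ' : Set ((Fin n → ZMod 2) × (Fin n → ZMod 4))) := hγ
    have hγ₀' : γ₀ ∈ (↑Γ' : Set ((Fin n → ZMod 2) × (Fin n → ZMod 4))) := hγ₀
    have h1 : a + γ + 7 • γ₀ ∈
        iterSumset 16 (↑Γ' : Set ((Fin n → ZMod 2) × (Fin n → ZMod 4))) := by
      have := mem_iterSumset_add (mem_iterSumset_add ha (mem_iterSumset_one hγ'))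
        (smul_mem_iterSumset hγ₀' 7)
      norm_num at this ⊢
      exact this
    have h2 : b + 8 • γ₀ ∈
        iterSumset 16 (↑Γ' : Set ((Fin n → ZMod 2) × (Fin n → ZMod 4))) := by
      have := mem_iterSumset_add hb (smul_mem_iterSumset hγ₀' 8)
      norm_num at this ⊢
      exact this
    refine ⟨_, h1, _, h2, ?_⟩
    beta_reduce at hab
    rw [← hab]
    abel
  let f : ↥Γ' × {y : Fin n → ZMod 4 //
        ((0 : Fin n → ZMod 2), y) ∈
          iterSumset 8 (↑Γ' : Set ((Fin n → ZMod 2) × (Fin n → ZMod 4)))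
            - iterSumset 8 (↑Γ' : Set ((Fin n → ZMod 2) × (Fin n → ZMod 4)))} →
      ↥(iterSumset 16 (↑Γ' : Set ((Fin n → ZMod 2) × (Fin n → ZMod 4)))
          - iterSumset 16 (↑Γ' : Set ((Fin n → ZMod 2) × (Fin n → ZMod 4)))) := fun p =>
    ⟨p.1.1 + ((0 : Fin n → ZMod 2), p.2.1) - γ₀, key _ p.1.2 _ p.2.2⟩
  have hf : Function.Injective f := by
    rintro ⟨⟨p, hp⟩, ⟨y, hy⟩⟩ ⟨⟨q, hq⟩, ⟨z, hz⟩⟩ h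
    simp only [f, Subtype.mk.injEq, sub_left_inj] at h
    have h1 : p.1 = q.1 := by
      have := congrArg Prod.fst h
      simpa using this
    have hpq : p = q := hinj p hp q hq h1
    subst hpq
    have h2 : y = z := by
      have := congrArg Prod.snd h
      simpa using this
    simp [h2]
  calc Γ'.card * Nat.card _ = Nat.card (↥Γ' × _) := by
        rw [Nat.card_prod, Nat.card_eq_finsetCard]
      _ ≤ Nat.card _ := Nat.card_le_card_of_injective f hf
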